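/- Let X_1,…,X_d (d ≥ 2, X_i ∈ ℝ^{p_i}) satisfy E|X_i| < ∞ and Assumption 1, let (X_1',…,X_d') be an independent copy of (X_1,…,X_d), and suppose dCov(X_i) := (E[U_{X_i}(X_i,X_i')²])^{1/2} > 0 for every i. Define JdCov_S²(X_1,…,X_d; c) = E[∏_{i=1}^d (U_{X_i}(X_i,X_i')/dCov(X_i) + c)] − c^d for c ≥ 0. Then for any vectors a_i ∈ ℝ^{p_i}, nonzero scalars c_i ∈ ℝ, orthogonal linear maps A_i : ℝ^{p_i} → ℝ^{p_i}, and any c ≥ 0: JdCov_S²(a_1 + c_1A_1X_1, …, a_d + c_dA_dX_d; c) = JdCov_S²(X_1,…,X_d; c). -/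
import Mathlib


open MeasureTheory ProbabilityTheory Filter Finset
open scoped BigOperators RealInnerProductSpace Classical

noncomputable section

/-- `U_X(x,x') = E‖x − X‖ + E‖X − x'‖ − ‖x − x'‖ − E‖X − X'‖`. -/
def Ufn {Ω E : Type*} [MeasurableSpace Ω] [NormedAddCommGroup E]
    (μ : Measure Ω) (X X' : Ω → E) (x x' : E) : ℝ :=
  (∫ ω, ‖x - X ω‖ ∂μ) + (∫ ω, ‖X ω - x'‖ ∂μ) - ‖x - x'‖ - ∫ ω, ‖X ω - X' ω‖ ∂μ

/-- squared distance covariance of the subcollection indexed by `S`. -/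
def dCov2sub {Ω : Type*} [MeasurableSpace Ω] {d : ℕ} {E : Fin d → Type*}
    [∀ i, NormedAddCommGroup (E i)] (μ : Measure Ω)
    (X X' : (i : Fin d) → Ω → E i) (S : Finset (Fin d)) : ℝ :=
  ∫ ω, ∏ i ∈ S, Ufn μ (X i) (X' i) (X i ω) (X' i ω) ∂μ

/-- squared d-th order distance covariance. -/
def dCov2 {Ω : Type*} [MeasurableSpace Ω] {d : ℕ} {E : Fin d → Type*}
    [∀ i, NormedAddCommGroup (E i)] (μ : Measure Ω)
    (X X' : (i : Fin d) → Ω → E i) : ℝ :=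
  dCov2sub μ X X' Finset.univ

/-- squared joint distance covariance with parameter `c`. -/
def JdCov2 {Ω : Type*} [MeasurableSpace Ω] {d : ℕ} {E : Fin d → Type*}
    [∀ i, NormedAddCommGroup (E i)] (μ : Measure Ω)
    (X X' : (i : Fin d) → Ω → E i) (c : ℝ) : ℝ :=
  ∑ S ∈ Finset.univ.filter (fun S : Finset (Fin d) => 2 ≤ S.card),
    c ^ (d - S.card) * dCov2sub μ X X' S

/-- squared joint distance covariance with general coefficients `C`. -/
def JdCov2C {Ω : Type*} [MeasurableSpace Ω] {d : ℕ} {E : Fin d → Type*}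
    [∀ i, NormedAddCommGroup (E i)] (μ : Measure Ω)
    (X X' : (i : Fin d) → Ω → E i) (C : ℕ → ℝ) : ℝ :=
  ∑ S ∈ Finset.univ.filter (fun S : Finset (Fin d) => 2 ≤ S.card),
    C S.card * dCov2sub μ X X' S

/-- `(X'_1,…,X'_d)` is an independent copy of `(X_1,…,X_d)`. -/
def IsIndepCopy {Ω : Type*} [MeasurableSpace Ω] {d : ℕ} {E : Fin d → Type*}
    [∀ i, MeasurableSpace (E i)] (μ : Measure Ω)
    (X X' : (i : Fin d) → Ω → E i) : Prop :=
  IndepFun (fun ω i => X i ω) (fun ω i => X' i ω) μ ∧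
  IdentDistrib (fun ω i => X i ω) (fun ω i => X' i ω) μ μ

/-- Assumption 1. -/
def Assumption1 {Ω : Type*} [MeasurableSpace Ω] {d : ℕ} {E : Fin d → Type*}
    [∀ i, NormedAddCommGroup (E i)] (μ : Measure Ω)
    (X : (i : Fin d) → Ω → E i) : Prop :=
  ∀ S : Finset (Fin d), 2 ≤ S.card →
    ∃ S₁ S₂ : Finset (Fin d), S₁ ∪ S₂ = S ∧ Disjoint S₁ S₂ ∧
      Integrable (fun ω => ∏ i ∈ S₁, ‖X i ω‖) μ ∧
      Integrable (fun ω => ∏ i ∈ S₂, ‖X i ω‖) μ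

/-- characteristic function of a Euclidean random vector. -/
def charFn {Ω : Type*} [MeasurableSpace Ω] {p : ℕ} (μ : Measure Ω)
    (X : Ω → EuclideanSpace ℝ (Fin p)) (t : EuclideanSpace ℝ (Fin p)) : ℂ :=
  ∫ ω, Complex.exp (Complex.I * ((⟪t, X ω⟫ : ℝ) : ℂ)) ∂μ

/-- the weight `w_p(t) = (c_p ‖t‖^{1+p})⁻¹`, `c_p = π^{(1+p)/2}/Γ((1+p)/2)`. -/
def wgt (p : ℕ) {E : Type*} [NormedAddCommGroup E] (t : E) : ℝ :=
  (Real.pi ^ ((1 + (p : ℝ)) / 2) / Real.Gamma ((1 + (p : ℝ)) / 2) * ‖t‖ ^ (1 + p))⁻¹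

/-- the distance variance `dCov(X) = (E[U_X(X,X')²])^{1/2}`. -/
def dVar {Ω E : Type*} [MeasurableSpace Ω] [NormedAddCommGroup E]
    (μ : Measure Ω) (X X' : Ω → E) : ℝ :=
  Real.sqrt (∫ ω, (Ufn μ X X' (X ω) (X' ω)) ^ 2 ∂μ)

/-- the scale-invariant squared joint distance covariance `JdCov_S²(X₁,…,X_d; c)`. -/
def JdCov2Scale {Ω : Type*} [MeasurableSpace Ω] {d : ℕ} {E : Fin d → Type*}
    [∀ i, NormedAddCommGroup (E i)] (μ : Measure Ω)
    (X X' : (i : Fin d) → Ω → E i) (c : ℝ) : ℝ :=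
  (∫ ω, ∏ i, (Ufn μ (X i) (X' i) (X i ω) (X' i ω) / dVar μ (X i) (X' i) + c) ∂μ) - c ^ d


lemma norm_affine_aux {E : Type*} [NormedAddCommGroup E] [NormedSpace ℝ E]
    (a : E) (c : ℝ) (A : E ≃ₗᵢ[ℝ] E) (x y : E) :
    ‖(a + c • A x) - (a + c • A y)‖ = |c| * ‖x - y‖ := by
  rw [add_sub_add_left_eq_sub, ← smul_sub, norm_smul, ← map_sub, A.norm_map,
    Real.norm_eq_abs]

lemma Ufn_affine {Ω E : Type*} [MeasurableSpace Ω] [NormedAddCommGroup E]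
    [NormedSpace ℝ E] (μ : Measure Ω) (X X' : Ω → E)
    (a : E) (c : ℝ) (A : E ≃ₗᵢ[ℝ] E) (x x' : E) :
    Ufn μ (fun ω => a + c • A (X ω)) (fun ω => a + c • A (X' ω))
      (a + c • A x) (a + c • A x') = |c| * Ufn μ X X' x x' := by
  unfold Ufn
  simp only [norm_affine_aux]
  rw [integral_const_mul, integral_const_mul, integral_const_mul]
  ring

lemma dVar_affine {Ω E : Type*} [MeasurableSpace Ω] [NormedAddCommGroup E]
    [NormedSpace ℝ E] (μ : Measure Ω) (X X' : Ω → E)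
    (a : E) (c : ℝ) (A : E ≃ₗᵢ[ℝ] E) :
    dVar μ (fun ω => a + c • A (X ω)) (fun ω => a + c • A (X' ω))
      = |c| * dVar μ X X' := by
  unfold dVar
  have h : ∀ ω, (Ufn μ (fun ω => a + c • A (X ω)) (fun ω => a + c • A (X' ω))
      (a + c • A (X ω)) (a + c • A (X' ω))) ^ 2
      = c ^ 2 * (Ufn μ X X' (X ω) (X' ω)) ^ 2 := by
    intro ω
    rw [Ufn_affine, mul_pow, sq_abs]
  simp only [h]
  rw [integral_const_mul, Real.sqrt_mul (sq_nonneg c), Real.sqrt_sq_eq_abs]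

/-- Proposition 3(2). `JdCov_S²` is invariant under translations, nonzero
scalings and orthogonal transformations of the components. -/
theorem stmt9 {Ω : Type*} [MeasurableSpace Ω] (μ : Measure Ω) [IsProbabilityMeasure μ]
    {d : ℕ} (hd : 2 ≤ d) {p : Fin d → ℕ}
    (X X' : (i : Fin d) → Ω → EuclideanSpace ℝ (Fin (p i)))
    (hm : ∀ i, Measurable (X i)) (hint : ∀ i, Integrable (X i) μ)
    (hA : Assumption1 μ X) (hcopy : IsIndepCopy μ X X')
    (hvar : ∀ i, 0 < dVar μ (X i) (X' i))
    (a : (i : Fin d) → EuclideanSpace ℝ (Fin (p i))) (c' : Fin d → ℝ)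
    (hc' : ∀ i, c' i ≠ 0)
    (A : (i : Fin d) → EuclideanSpace ℝ (Fin (p i)) ≃ₗᵢ[ℝ] EuclideanSpace ℝ (Fin (p i)))
    (c : ℝ) (hc : 0 ≤ c) :
    JdCov2Scale μ (fun i ω => a i + c' i • (A i) (X i ω))
        (fun i ω => a i + c' i • (A i) (X' i ω)) c = JdCov2Scale μ X X' c := by
  unfold JdCov2Scale
  congr 1
  apply integral_congr_ae
  filter_upwards with ω
  apply Finset.prod_congr rfl
  intro i _
  congr 1
  rw [Ufn_affine, dVar_affine,
    mul_div_mul_left _ _ (abs_ne_zero.mpr (hc' i))]
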